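/- Let M be a matroid on a finite ground set E and ω : E → ℝ. If B is maximal among the subsets of E that contain no set of the form init_ω(C) for a circuit C of M, then B is a basis of M. -/

import Mathlib

/-- `initW ω C` is the set of `ω`-maximal elements of `C`. -/
def initW {α : Type*} (ω : α → ℝ) (C : Set α) : Set α :=
  {e ∈ C | ∀ f ∈ C, ω f ≤ ω e}

/-- A circuit of a matroid is a minimal dependent set. -/
def IsCircuit {α : Type*} (M : Matroid α) (C : Set α) : Prop :=
  Minimal M.Dep C

/-- Every finite dependent set contains a circuit. -/
lemma exists_circuit_subset {α : Type*} (M : Matroid α) {D : Set α} (hfin : D.Finite)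
    (hD : M.Dep D) : ∃ C ⊆ D, IsCircuit M C := by
  have hsfin : {C : Set α | C ⊆ D ∧ M.Dep C}.Finite :=
    (hfin.finite_subsets).subset (fun C hC => hC.1)
  obtain ⟨C, hCmem, hCmin⟩ := Set.Finite.exists_minimalFor id _ hsfin ⟨D, subset_rfl, hD⟩
  refine ⟨C, hCmem.1, hCmem.2, fun y hy hyC => ?_⟩
  have : C = y := (hCmin ⟨hyC.trans hCmem.1, hy⟩ hyC).antisymm hyC
  exact this.le

/-- If `B` is maximal among the subsets of the (finite) ground set of `M` that contain no
set of the form `initW ω C` for a circuit `C` of `M`, then `B` is a basis of `M`. -/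
theorem stmt3 {α : Type*} (M : Matroid α) (hfin : M.E.Finite) (ω : α → ℝ) (B : Set α)
    (hB : Maximal (fun S : Set α =>
      S ⊆ M.E ∧ ∀ C : Set α, IsCircuit M C → ¬ initW ω C ⊆ S) B) :
    M.IsBase B := by
  obtain ⟨⟨hBE, hBcirc⟩, hmax⟩ := hB
  have hBfin : B.Finite := hfin.subset hBE
  have hBi : M.Indep B := by
    rw [← M.not_dep_iff hBE]
    intro hdep
    obtain ⟨C, hCD, hC⟩ := exists_circuit_subset M hBfin hdep
    exact hBcirc C hC (fun x hx => hCD hx.1)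
  refine hBi.isBase_of_spanning ?_
  by_contra hns
  have hne : (M.E \ M.closure B).Nonempty := by
    rw [Set.diff_nonempty]
    intro hle
    exact hns ((M.spanning_iff_closure_eq hBE).2
      (subset_antisymm (M.closure_subset_ground B) hle))
  obtain ⟨e, he, hemin⟩ := Set.exists_min_image _ ω (hfin.diff (t := M.closure B)) hne
  have heE := he.1
  have hecl := he.2
  have heB : e ∉ B := fun h => hecl (M.subset_closure B hBE h)
  have hprop : insert e B ⊆ M.E ∧ ∀ C, IsCircuit M C → ¬ initW ω C ⊆ insert e B := by
    refine ⟨Set.insert_subset heE hBE, fun C hC hsub => ?_⟩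
    have hCdep := hC.1
    have hCE : C ⊆ M.E := hCdep.subset_ground
    have heC : e ∈ initW ω C := by
      by_contra h
      refine hBcirc C hC (fun x hx => ?_)
      rcases hsub hx with h1 | h1
      · exact absurd (h1 ▸ hx) h
      · exact h1
    have hg : ∃ g ∈ C, g ∉ M.closure B ∧ g ≠ e := by
      by_contra h
      push_neg at h
      have hsub2 : C \ {e} ⊆ M.closure B := fun x hx => by
        by_contra hx'
        exact hx.2 (h x hx.1 hx')
      have hCe_indep : M.Indep (C \ {e}) := by
        rw [← M.not_dep_iff (Set.diff_subset.trans hCE)]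
        intro hd
        exact (hC.2 hd Set.diff_subset heC.1).2 rfl
      have hmemcl : e ∈ M.closure (C \ {e}) := by
        rw [hCe_indep.mem_closure_iff]
        left
        rwa [Set.insert_diff_singleton, Set.insert_eq_self.2 heC.1]
      have h1 := M.closure_subset_closure hsub2 hmemcl
      rw [M.closure_closure] at h1
      exact hecl h1
    obtain ⟨g, hgC, hgcl, hge⟩ := hg
    have h1 : ω e ≤ ω g := hemin g ⟨hCE hgC, hgcl⟩
    have hgB : g ∉ B := fun h => hgcl (M.subset_closure B hBE h)
    have hgni : g ∉ initW ω C := fun h => (hsub h).elim hge (fun h' => hgB h')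
    have hx : ¬ ∀ f ∈ C, ω f ≤ ω g := fun h => hgni ⟨hgC, h⟩
    push_neg at hx
    obtain ⟨f, hfC, hgf⟩ := hx
    have h2 : ω f ≤ ω e := heC.2 f hfC
    linarith
  exact heB (hmax hprop (Set.subset_insert e B) (Set.mem_insert e B))
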